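/- For every polynomial Q ∈ ℂ[t] there exists a unique polynomial P ∈ ℂ[t] such that Q(-s(s-1)) - Q(-s(s+1)) = (s-1)·P(-s(s-1)) + (s+1)·P(-s(s+1)) as polynomials in s. -/

import Mathlib

open Polynomial

noncomputable section LevyAux

private def levyT (P : ℂ[X]) : ℂ[X] :=
  (X - 1) * P.comp (-(X * (X - 1))) + (X + 1) * P.comp (-(X * (X + 1)))

private lemma levyA_natDegree : (-(X * (X - 1)) : ℂ[X]).natDegree = 2 := by
  have h : (-(X * (X - 1)) : ℂ[X]) = C (-1) * X ^ 2 + C 1 * X + C 0 := by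
    simp only [map_neg, map_one, map_zero]; ring
  rw [h, natDegree_quadratic (by norm_num)]

private lemma levyB_natDegree : (-(X * (X + 1)) : ℂ[X]).natDegree = 2 := by
  have h : (-(X * (X + 1)) : ℂ[X]) = C (-1) * X ^ 2 + C (-1) * X + C 0 := by
    simp only [map_neg, map_one, map_zero]; ring
  rw [h, natDegree_quadratic (by norm_num)]

private lemma levyA_leadingCoeff : (-(X * (X - 1)) : ℂ[X]).leadingCoeff = -1 := by
  have h : (-(X * (X - 1)) : ℂ[X]) = C (-1) * X ^ 2 + C 1 * X + C 0 := by
    simp only [map_neg, map_one, map_zero]; ring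
  rw [h, leadingCoeff_quadratic (by norm_num)]

private lemma levyB_leadingCoeff : (-(X * (X + 1)) : ℂ[X]).leadingCoeff = -1 := by
  have h : (-(X * (X + 1)) : ℂ[X]) = C (-1) * X ^ 2 + C (-1) * X + C 0 := by
    simp only [map_neg, map_one, map_zero]; ring
  rw [h, leadingCoeff_quadratic (by norm_num)]

private lemma levyT_injective (P : ℂ[X]) (h : levyT P = 0) : P = 0 := by
  by_contra hP
  set n := P.natDegree with hn
  have hlead : P.leadingCoeff ≠ 0 := leadingCoeff_ne_zero.mpr hP
  have hPA : (P.comp (-(X * (X - 1)))).leadingCoeff = P.leadingCoeff * (-1) ^ n := by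
    rw [leadingCoeff_comp (by rw [levyA_natDegree]; norm_num), levyA_leadingCoeff]
  have hPB : (P.comp (-(X * (X + 1)))).leadingCoeff = P.leadingCoeff * (-1) ^ n := by
    rw [leadingCoeff_comp (by rw [levyB_natDegree]; norm_num), levyB_leadingCoeff]
  have hne : P.leadingCoeff * (-1 : ℂ) ^ n ≠ 0 :=
    mul_ne_zero hlead (pow_ne_zero n (by norm_num))
  have hPAne : P.comp (-(X * (X - 1))) ≠ 0 := by
    intro h0; rw [h0, leadingCoeff_zero] at hPA; exact hne hPA.symm
  have hPBne : P.comp (-(X * (X + 1))) ≠ 0 := by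
    intro h0; rw [h0, leadingCoeff_zero] at hPB; exact hne hPB.symm
  have hX1 : ((X : ℂ[X]) - 1) = X - C 1 := by simp
  have hX1' : ((X : ℂ[X]) + 1) = X + C 1 := by simp
  have hdX1 : ((X : ℂ[X]) - 1).natDegree = 1 := by rw [hX1, natDegree_X_sub_C]
  have hdX1' : ((X : ℂ[X]) + 1).natDegree = 1 := by rw [hX1', natDegree_X_add_C]
  have hd1 : (levyT P).coeff (2 * n + 1)
      = ((X - 1) * P.comp (-(X * (X - 1)))).coeff (2 * n + 1)
        + ((X + 1) * P.comp (-(X * (X + 1)))).coeff (2 * n + 1) := by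
    simp [levyT]
  have hdegA : ((X - 1) * P.comp (-(X * (X - 1)))).natDegree = 2 * n + 1 := by
    rw [natDegree_mul (by rw [hX1]; exact X_sub_C_ne_zero 1) hPAne, hdX1,
      natDegree_comp, levyA_natDegree]
    ring
  have hdegB : ((X + 1) * P.comp (-(X * (X + 1)))).natDegree = 2 * n + 1 := by
    rw [natDegree_mul (by rw [hX1']; exact X_add_C_ne_zero 1) hPBne, hdX1',
      natDegree_comp, levyB_natDegree]
    ring
  have hcA : ((X - 1) * P.comp (-(X * (X - 1)))).coeff (2 * n + 1)
      = P.leadingCoeff * (-1) ^ n := by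
    rw [← hdegA, coeff_natDegree, leadingCoeff_mul, hPA, hX1, leadingCoeff_X_sub_C, one_mul]
  have hcB : ((X + 1) * P.comp (-(X * (X + 1)))).coeff (2 * n + 1)
      = P.leadingCoeff * (-1) ^ n := by
    rw [← hdegB, coeff_natDegree, leadingCoeff_mul, hPB, hX1', leadingCoeff_X_add_C, one_mul]
  rw [h, coeff_zero, hcA, hcB] at hd1
  have : (2 : ℂ) * (P.leadingCoeff * (-1) ^ n) = 0 := by linear_combination -hd1
  rcases mul_eq_zero.mp this with h2 | h2
  · norm_num at h2
  · exact hne h2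

private lemma levy_coeff_comp_neg_X (p : ℂ[X]) (n : ℕ) :
    (p.comp (-X)).coeff n = (-1) ^ n * p.coeff n := by
  induction p using Polynomial.induction_on' with
  | add p q hp hq => simp only [add_comp, coeff_add, hp, hq]; ring
  | monomial k a =>
    rw [← C_mul_X_pow_eq_monomial, mul_comp, C_comp, pow_comp, X_comp, neg_pow]
    have hC : ((-1 : ℂ[X])) ^ k = C ((-1) ^ k) := by rw [map_pow, map_neg, map_one]
    rw [hC, coeff_C_mul, coeff_C_mul, coeff_X_pow, coeff_C_mul, coeff_X_pow]
    by_cases hnk : n = k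
    · subst hnk; simp; ring
    · simp [hnk]

private lemma levyT_odd (P : ℂ[X]) : (levyT P).comp (-X) = - levyT P := by
  have hA : ((-(X * (X - 1)) : ℂ[X]).comp (-X)) = -(X * (X + 1)) := by
    simp only [neg_comp, mul_comp, sub_comp, add_comp, X_comp, one_comp]; ring
  have hB : ((-(X * (X + 1)) : ℂ[X]).comp (-X)) = -(X * (X - 1)) := by
    simp only [neg_comp, mul_comp, sub_comp, add_comp, X_comp, one_comp]; ring
  simp only [levyT, add_comp, mul_comp, sub_comp, X_comp, one_comp, comp_assoc, hA, hB]
  ring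

private lemma levyL_odd (Q : ℂ[X]) :
    (Q.comp (-(X * (X - 1))) - Q.comp (-(X * (X + 1)))).comp (-X)
      = -(Q.comp (-(X * (X - 1))) - Q.comp (-(X * (X + 1)))) := by
  have hA : ((-(X * (X - 1)) : ℂ[X]).comp (-X)) = -(X * (X + 1)) := by
    simp only [neg_comp, mul_comp, sub_comp, add_comp, X_comp, one_comp]; ring
  have hB : ((-(X * (X + 1)) : ℂ[X]).comp (-X)) = -(X * (X - 1)) := by
    simp only [neg_comp, mul_comp, sub_comp, add_comp, X_comp, one_comp]; ring
  simp only [sub_comp, comp_assoc, hA, hB]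
  ring

private lemma levyT_add (P Q : ℂ[X]) : levyT (P + Q) = levyT P + levyT Q := by
  simp only [levyT, add_comp]; ring

private lemma levyT_sub (P Q : ℂ[X]) : levyT (P - Q) = levyT P - levyT Q := by
  simp only [levyT, sub_comp]; ring

private lemma levyT_monomial (c : ℂ) (k : ℕ) :
    levyT (C c * X ^ k)
      = C ((-1) ^ k * c) * (X ^ k * ((X - 1) ^ (k + 1) + (X + 1) ^ (k + 1))) := by
  simp only [levyT, mul_comp, C_comp, pow_comp, X_comp, map_mul, map_pow, map_neg, map_one]
  rw [show (-(X * (X - 1)) : ℂ[X]) = -1 * X * (X - 1) by ring,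
    show (-(X * (X + 1)) : ℂ[X]) = -1 * X * (X + 1) by ring]
  simp only [mul_pow]
  ring

private lemma levyS_coeff (k : ℕ) :
    (((X : ℂ[X]) - 1) ^ (k + 1) + (X + 1) ^ (k + 1)).coeff (k + 1) = 2 := by
  have h1 : ((X : ℂ[X]) - 1) = X - C 1 := by simp
  have h2 : ((X : ℂ[X]) + 1) = X + C 1 := by simp
  have m1 : (((X : ℂ[X]) - 1) ^ (k + 1)).Monic := by
    rw [h1]; exact (monic_X_sub_C (1 : ℂ)).pow _
  have m2 : (((X : ℂ[X]) + 1) ^ (k + 1)).Monic := by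
    rw [h2]; exact (monic_X_add_C (1 : ℂ)).pow _
  have d1 : (((X : ℂ[X]) - 1) ^ (k + 1)).natDegree = k + 1 := by
    rw [natDegree_pow, h1, natDegree_X_sub_C, mul_one]
  have d2 : (((X : ℂ[X]) + 1) ^ (k + 1)).natDegree = k + 1 := by
    rw [natDegree_pow, h2, natDegree_X_add_C, mul_one]
  have c1 : (((X : ℂ[X]) - 1) ^ (k + 1)).coeff (k + 1) = 1 := by
    have := m1.coeff_natDegree; rwa [d1] at this
  have c2 : (((X : ℂ[X]) + 1) ^ (k + 1)).coeff (k + 1) = 1 := by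
    have := m2.coeff_natDegree; rwa [d2] at this
  rw [coeff_add, c1, c2]
  norm_num

private lemma levyS_natDegree_le (k : ℕ) :
    (((X : ℂ[X]) - 1) ^ (k + 1) + (X + 1) ^ (k + 1)).natDegree ≤ k + 1 := by
  have h1 : ((X : ℂ[X]) - 1) = X - C 1 := by simp
  have h2 : ((X : ℂ[X]) + 1) = X + C 1 := by simp
  refine natDegree_add_le_of_degree_le ?_ ?_
  · rw [natDegree_pow, h1, natDegree_X_sub_C, mul_one]
  · rw [natDegree_pow, h2, natDegree_X_add_C, mul_one]

private lemma levyT_monomial_coeff (c : ℂ) (k : ℕ) :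
    (levyT (C c * X ^ k)).coeff (2 * k + 1) = (-1) ^ k * c * 2 := by
  rw [levyT_monomial, coeff_C_mul]
  have : 2 * k + 1 = (k + 1) + k := by ring
  rw [this, coeff_X_pow_mul, levyS_coeff]

private lemma levyT_monomial_natDegree_le (c : ℂ) (k : ℕ) :
    (levyT (C c * X ^ k)).natDegree ≤ 2 * k + 1 := by
  rw [levyT_monomial]
  refine le_trans (natDegree_C_mul_le _ _) ?_
  refine le_trans (natDegree_mul_le) ?_
  have := levyS_natDegree_le k
  have hx : ((X : ℂ[X]) ^ k).natDegree = k := natDegree_X_pow k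
  omega

private lemma levyT_surj_odd : ∀ d : ℕ, ∀ R : ℂ[X], R.natDegree ≤ d →
    R.comp (-X) = -R → ∃ P : ℂ[X], levyT P = R := by
  intro d
  induction d using Nat.strong_induction_on with
  | _ d ih =>
    intro R hdeg hodd
    by_cases hR : R = 0
    · exact ⟨0, by simp [levyT, hR]⟩
    set m := R.natDegree with hm
    have hleadne : R.leadingCoeff ≠ 0 := leadingCoeff_ne_zero.mpr hR
    have hmodd : Odd m := by
      have h1 : (R.comp (-X)).coeff m = (-1) ^ m * R.coeff m :=
        levy_coeff_comp_neg_X R m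
      rw [hodd, coeff_neg] at h1
      have hRm : R.coeff m ≠ 0 := hleadne
      rcases Nat.even_or_odd m with he | ho
      · exfalso
        rw [he.neg_one_pow, one_mul] at h1
        have : (2 : ℂ) * R.coeff m = 0 := by linear_combination -h1
        simp at this
        exact hRm this
      · exact ho
    obtain ⟨k, hk⟩ := hmodd
    set c : ℂ := R.leadingCoeff * (-1) ^ k / 2 with hc
    set P₀ : ℂ[X] := C c * X ^ k with hP₀
    have hco : (levyT P₀).coeff m = R.leadingCoeff := by
      rw [hk, levyT_monomial_coeff, hc]
      have : ((-1 : ℂ) ^ k) * ((-1 : ℂ) ^ k) = 1 := by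
        rw [← pow_add]; exact Even.neg_one_pow ⟨k, rfl⟩
      field_simp
      linear_combination this
    have hdegT : (levyT P₀).natDegree ≤ m := by
      rw [hk]; exact levyT_monomial_natDegree_le c k
    set R' := R - levyT P₀ with hR'
    have hodd' : R'.comp (-X) = -R' := by
      rw [hR', sub_comp, hodd, levyT_odd]; ring
    by_cases hR'0 : R' = 0
    · exact ⟨P₀, by rw [← sub_eq_zero]; rw [hR'] at hR'0; linear_combination -hR'0⟩
    · have hle : R'.natDegree ≤ m := le_trans (natDegree_sub_le _ _) (by simp [hdegT]; exact le_rfl)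
      have hc0 : R'.coeff m = 0 := by
        have hRm : R.coeff m = R.leadingCoeff := rfl
        rw [hR', coeff_sub, hco, hRm, sub_self]
      have hlt : R'.natDegree < m := by
        rcases lt_or_eq_of_le hle with h | h
        · exact h
        · exfalso
          have := coeff_natDegree (p := R')
          rw [h, hc0] at this
          exact leadingCoeff_ne_zero.mpr hR'0 this.symm
      obtain ⟨P₁, hP₁⟩ := ih R'.natDegree (lt_of_lt_of_le hlt hdeg) R' le_rfl hodd'
      refine ⟨P₀ + P₁, ?_⟩
      rw [levyT_add, hP₁, hR']
      ring

end LevyAux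

/-- For every polynomial `Q ∈ ℂ[t]` there is a unique polynomial `P ∈ ℂ[t]` such that
`Q(-s(s-1)) - Q(-s(s+1)) = (s-1)·P(-s(s-1)) + (s+1)·P(-s(s+1))` as polynomials in `s`. -/
theorem levy_P_exists_unique (Q : Polynomial ℂ) :
    ∃! P : Polynomial ℂ,
      Q.comp (-(X * (X - 1))) - Q.comp (-(X * (X + 1)))
        = (X - 1) * P.comp (-(X * (X - 1))) + (X + 1) * P.comp (-(X * (X + 1))) := by
  obtain ⟨P, hP⟩ := levyT_surj_odd (Q.comp (-(X * (X - 1))) - Q.comp (-(X * (X + 1)))).natDegree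
    _ le_rfl (levyL_odd Q)
  refine ⟨P, hP.symm, ?_⟩
  intro P' hP'
  have : levyT (P' - P) = 0 := by
    rw [levyT_sub]
    have h1 : levyT P' = Q.comp (-(X * (X - 1))) - Q.comp (-(X * (X + 1))) := hP'.symm
    rw [h1, hP]
    ring
  have := levyT_injective _ this
  linear_combination this
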